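/- Let A, Q ⊆ ℝ³ be periodic point sets and let r_Q > 0 be the packing radius of Q. If there exists a bijection γ: A → Q with sup_{a∈A} ‖a − γ(a)‖ < r_Q, then there exists a common full-rank lattice Λ with unit cell U such that A = (A ∩ U) + Λ, Q = (Q ∩ U) + Λ, and |A ∩ U| = |Q ∩ U|. -/

import Mathlib

open MeasureTheory Set Metric Pointwise

noncomputable section

/-- 3-dimensional Euclidean space. -/
abbrev E3 := EuclideanSpace ℝ (Fin 3)

/-- The lattice generated by the vectors `b 0, b 1, b 2`. -/
def lat (b : Fin 3 → E3) : Set E3 := {x | ∃ n : Fin 3 → ℤ, x = ∑ i, (n i : ℝ) • b i}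

/-- The unit cell spanned by the vectors `b 0, b 1, b 2`. -/
def cell (b : Fin 3 → E3) : Set E3 :=
  {x | ∃ c : Fin 3 → ℝ, (∀ i, 0 ≤ c i ∧ c i < 1) ∧ x = ∑ i, c i • b i}

/-- The `k`-fold cover: points lying in at least `k` closed balls of radius `t`
centered at points of `A`. -/
def coverGE (A : Set E3) (t : ℝ) (k : ℕ) : Set E3 :=
  {x | ∃ F : Finset E3, F.card = k ∧ ↑F ⊆ A ∧ ∀ a ∈ F, dist x a ≤ t}

/-- Points lying in exactly `k` closed balls of radius `t` centered at points of `A`. -/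
def coverEQ (A : Set E3) (t : ℝ) (k : ℕ) : Set E3 :=
  {x | ∃ F : Finset E3, ↑F = {a ∈ A | dist x a ≤ t} ∧ F.card = k}

/-- The `k`-th Dirichlet–Voronoi domain of `a` in `A` (with `D_0 = ∅`). -/
def DV (A : Set E3) (a : E3) : ℕ → Set E3
  | 0 => ∅
  | (k+1) => {x | ({b ∈ A | dist x b < dist x a}).ncard ≤ k}

/-- The `k`-th Brillouin zone of `a` in `A`. -/
def BZ (A : Set E3) (a : E3) (k : ℕ) : Set E3 := DV A a k \ DV A a (k-1)

lemma lat_eq_span (b : Fin 3 → E3) :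
    lat b = ↑(Submodule.span ℤ (Set.range b)) := by
  ext x
  simp only [lat, Set.mem_setOf_eq, SetLike.mem_coe, Submodule.mem_span_range_iff_exists_fun]
  constructor
  · rintro ⟨n, rfl⟩
    exact ⟨n, by simp [Int.cast_smul_eq_zsmul]⟩
  · rintro ⟨n, rfl⟩
    exact ⟨n, by simp [Int.cast_smul_eq_zsmul]⟩

lemma cell_eq_fd (c : Module.Basis (Fin 3) ℝ E3) :
    cell ⇑c = ZSpan.fundamentalDomain c := by
  ext x
  constructor
  · rintro ⟨cf, hcf, rfl⟩
    rw [ZSpan.mem_fundamentalDomain]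
    intro i
    rw [c.repr_sum_self]
    exact ⟨(hcf i).1, (hcf i).2⟩
  · intro hx
    exact ⟨fun i => c.repr x i, fun i => ⟨(hx i).1, (hx i).2⟩, (c.sum_repr x).symm⟩

lemma decomp (S : Set E3) (Λ : Submodule ℤ E3) (c : Module.Basis (Fin 3) ℝ E3)
    (hspan : Submodule.span ℤ (Set.range ⇑c) = Λ)
    (hS : ∀ s ∈ S, ∀ v ∈ Λ, s + v ∈ S) :
    S = (S ∩ cell ⇑c) + lat ⇑c := by
  have hlat : lat ⇑c = ↑Λ := by rw [lat_eq_span, hspan]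
  apply Set.Subset.antisymm
  · intro s hs
    have hfl : (ZSpan.floor c s : E3) ∈ Λ := by
      rw [← hspan]; exact (ZSpan.floor c s).2
    have hfr : ZSpan.fract c s ∈ S := by
      have := hS s hs _ (neg_mem hfl)
      simpa [ZSpan.fract_apply, sub_eq_add_neg] using this
    have hdecomp : s = ZSpan.fract c s + (ZSpan.floor c s : E3) := by
      rw [ZSpan.fract_apply]; abel
    rw [hdecomp]
    exact Set.add_mem_add ⟨hfr, (cell_eq_fd c) ▸ ZSpan.fract_mem_fundamentalDomain c s⟩
      (by rw [hlat]; exact hfl)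
  · rintro x hx
    rw [Set.mem_add] at hx
    obtain ⟨y, hy, z, hz, rfl⟩ := hx
    exact hS y hy.1 z (by rw [hlat] at hz; exact hz)

theorem common_lattice (bA bQ : Fin 3 → E3)
    (hbA : LinearIndependent ℝ bA) (hbQ : LinearIndependent ℝ bQ)
    (MA MQ : Finset E3) (hMA : ↑MA ⊆ cell bA) (hMQ : ↑MQ ⊆ cell bQ)
    (A Q : Set E3) (hA : A = ↑MA + lat bA) (hQ : Q = ↑MQ + lat bQ)
    (rQ : ℝ) (hrQ : 0 < rQ)
    (hpackQ : ∀ q ∈ Q, ∀ q' ∈ Q, q ≠ q' → 2 * rQ ≤ dist q q')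
    (γ : E3 → E3) (hγ : Set.BijOn γ A Q)
    (δ : ℝ) (hδ : δ < rQ) (hclose : ∀ a ∈ A, dist a (γ a) ≤ δ) :
    ∃ b : Fin 3 → E3, LinearIndependent ℝ b ∧
      A = (A ∩ cell b) + lat b ∧ Q = (Q ∩ cell b) + lat b ∧
      (A ∩ cell b).ncard = (Q ∩ cell b).ncard := by
  by_cases hAne : A.Nonempty
  swap
  · have hAe : A = ∅ := Set.not_nonempty_iff_eq_empty.mp hAne
    have hQe : Q = ∅ := by
      ext q
      simp only [Set.mem_empty_iff_false, iff_false]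
      intro hq
      obtain ⟨a, ha, -⟩ := hγ.2.2 hq
      rw [hAe] at ha
      exact ha
    exact ⟨bA, hbA, by simp [hAe], by simp [hQe], by simp [hAe, hQe]⟩
  obtain ⟨a₀, ha₀⟩ := hAne
  set spanA : Submodule ℤ E3 := Submodule.span ℤ (Set.range bA) with hspanA_def
  set spanQ : Submodule ℤ E3 := Submodule.span ℤ (Set.range bQ) with hspanQ_def
  -- periodicity of A and Q
  have hAper : ∀ a ∈ A, ∀ v ∈ spanA, a + v ∈ A := by
    intro a ha v hv
    rw [hA, Set.mem_add] at ha ⊢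
    obtain ⟨t, ht, w, hw, rfl⟩ := ha
    rw [lat_eq_span] at hw
    refine ⟨t, ht, w + v, ?_, by abel⟩
    rw [lat_eq_span]
    exact add_mem hw hv
  have hQper : ∀ q ∈ Q, ∀ v ∈ spanQ, q + v ∈ Q := by
    intro q hq v hv
    rw [hQ, Set.mem_add] at hq ⊢
    obtain ⟨t, ht, w, hw, rfl⟩ := hq
    rw [lat_eq_span] at hw
    refine ⟨t, ht, w + v, ?_, by abel⟩
    rw [lat_eq_span]
    exact add_mem hw hv
  -- uniqueness of the close point of Q
  have huniq : ∀ a ∈ A, ∀ q ∈ Q, dist a q ≤ δ → q = γ a := by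
    intro a ha q hq hd
    by_contra hne
    have h1 : 2 * rQ ≤ dist q (γ a) := hpackQ q hq (γ a) (hγ.1 ha) hne
    have h2 : dist q (γ a) ≤ δ + δ :=
      (dist_triangle q a (γ a)).trans
        (add_le_add (by rwa [dist_comm]) (hclose a ha))
    linarith
  -- the key discreteness lemma
  have hkey : ∀ l ∈ spanA, ∀ m ∈ spanQ, ‖l + m‖ < 2 * (rQ - δ) → l + m = 0 := by
    intro l hl m hm hg
    have hstep : ∀ a ∈ A, γ (a - l) = γ a + m := by
      intro a ha
      have hal : a - l ∈ A := by
        have := hAper a ha (-l) (neg_mem hl)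
        simpa [sub_eq_add_neg] using this
      have hq1 : γ (a - l) ∈ Q := hγ.1 hal
      have hq2 : γ a + m ∈ Q := hQper (γ a) (hγ.1 ha) m hm
      by_contra hne
      have h1 : 2 * rQ ≤ dist (γ (a - l)) (γ a + m) := hpackQ _ hq1 _ hq2 hne
      have h2 : dist (a - l) (γ a + m) ≤ δ + ‖l + m‖ := by
        rw [dist_eq_norm]
        have heq : a - l - (γ a + m) = (a - γ a) - (l + m) := by abel
        rw [heq]
        refine (norm_sub_le _ _).trans ?_
        have : ‖a - γ a‖ ≤ δ := by rw [← dist_eq_norm]; exact hclose a ha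
        linarith
      have h3 : dist (γ (a - l)) (a - l) ≤ δ := by
        rw [dist_comm]; exact hclose _ hal
      have h4 := dist_triangle (γ (a - l)) (a - l) (γ a + m)
      linarith
    have hmem : ∀ n : ℕ, a₀ - n • l ∈ A := by
      intro n
      have := hAper a₀ ha₀ (-(n • l)) (neg_mem (nsmul_mem hl n))
      simpa [sub_eq_add_neg] using this
    have hiter : ∀ n : ℕ, γ (a₀ - n • l) = γ a₀ + n • m := by
      intro n
      induction n with
      | zero => simp
      | succ n ih =>
        have h1 : a₀ - (n + 1) • l = (a₀ - n • l) - l := by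
          rw [succ_nsmul]; abel
        rw [h1, hstep _ (hmem n), ih, succ_nsmul]
        abel
    by_contra hg0
    have hnorm : ∀ n : ℕ, (n : ℝ) * ‖l + m‖ ≤ 2 * δ := by
      intro n
      have hd := hclose _ (hmem n)
      rw [hiter n, dist_eq_norm] at hd
      have heq : a₀ - n • l - (γ a₀ + n • m) = (a₀ - γ a₀) - n • (l + m) := by
        rw [smul_add]; abel
      rw [heq] at hd
      have h2 : ‖n • (l + m)‖ ≤ ‖a₀ - γ a₀‖ + ‖(a₀ - γ a₀) - n • (l + m)‖ := by
        have h5 := norm_sub_le (a₀ - γ a₀) ((a₀ - γ a₀) - n • (l + m))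
        rwa [sub_sub_cancel] at h5
      have h3 : ‖a₀ - γ a₀‖ ≤ δ := by rw [← dist_eq_norm]; exact hclose a₀ ha₀
      have h4 : ‖n • (l + m)‖ = (n : ℝ) * ‖l + m‖ := by
        rw [← Nat.cast_smul_eq_nsmul ℝ, norm_smul]
        simp
      linarith
    have hgpos : 0 < ‖l + m‖ := norm_pos_iff.mpr hg0
    obtain ⟨n, hn⟩ := exists_nat_gt (2 * δ / ‖l + m‖)
    rw [div_lt_iff₀ hgpos] at hn
    have := hnorm n
    linarith
  have hε : (0 : ℝ) < 2 * (rQ - δ) := by linarith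
  -- the common lattice
  set Λ : Submodule ℤ E3 := spanA ⊓ spanQ with hΛ_def
  have hdisc : ∀ x ∈ Λ, ‖x‖ < 2 * (rQ - δ) → x = 0 := by
    intro x hx h
    simpa using hkey x hx.1 0 (zero_mem _) (by simpa using h)
  have hDΛ : DiscreteTopology Λ := by
    refine discreteTopology_iff_isOpen_singleton_zero.mpr
      ⟨Metric.ball 0 (2 * (rQ - δ)), Metric.isOpen_ball, ?_⟩
    ext x
    simp only [Set.mem_preimage, mem_ball_zero_iff, Set.mem_singleton_iff]
    constructor
    · intro h
      exact Subtype.ext (hdisc x.1 x.2 h)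
    · rintro rfl
      simpa using hε
  have hDS : DiscreteTopology (spanA ⊔ spanQ : Submodule ℤ E3) := by
    refine discreteTopology_iff_isOpen_singleton_zero.mpr
      ⟨Metric.ball 0 (2 * (rQ - δ)), Metric.isOpen_ball, ?_⟩
    ext x
    simp only [Set.mem_preimage, mem_ball_zero_iff, Set.mem_singleton_iff]
    constructor
    · intro h
      obtain ⟨l, hl, m, hm, hx⟩ := Submodule.mem_sup.mp x.2
      have : (x : E3) = 0 := by
        rw [← hx] at h ⊢
        exact hkey l hl m hm h
      exact Subtype.ext this
    · rintro rfl
      simpa using hε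
  -- every bA i has a positive multiple in spanQ
  have h3 : Fintype.card (Fin 3) = Module.finrank ℝ E3 := by
    simp [finrank_euclideanSpace]
  set cQb : Module.Basis (Fin 3) ℝ E3 := basisOfLinearIndependentOfCardEqFinrank hbQ h3 with hcQb_def
  have hcQb : ⇑cQb = bQ := coe_basisOfLinearIndependentOfCardEqFinrank hbQ h3
  have hcQspan : Submodule.span ℤ (Set.range ⇑cQb) = spanQ := by rw [hcQb]
  have hmult : ∀ i : Fin 3, ∃ K : ℤ, 0 < K ∧ K • bA i ∈ spanQ := by
    intro i
    have hxA : bA i ∈ spanA := Submodule.subset_span (Set.mem_range_self i)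
    set f : ℕ → E3 := fun n => ZSpan.fract cQb (n • bA i) with hf_def
    have hf1 : ∀ n, f n ∈ ZSpan.fundamentalDomain cQb := fun n =>
      ZSpan.fract_mem_fundamentalDomain _ _
    have hf2 : ∀ n, f n ∈ (spanA ⊔ spanQ : Submodule ℤ E3) := by
      intro n
      have h1 : (n • bA i : E3) ∈ spanA := nsmul_mem hxA n
      have h2 : (ZSpan.floor cQb (n • bA i) : E3) ∈ spanQ :=
        (le_of_eq hcQspan) (ZSpan.floor cQb (n • bA i)).2
      have heq : f n = n • bA i - (ZSpan.floor cQb (n • bA i) : E3) := rfl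
      rw [heq]
      exact sub_mem (Submodule.mem_sup_left h1) (Submodule.mem_sup_right h2)
    have hfin : Set.Finite (ZSpan.fundamentalDomain cQb ∩
        (((spanA ⊔ spanQ : Submodule ℤ E3).toAddSubgroup : AddSubgroup E3) : Set E3)) := by
      have hD' : DiscreteTopology ((spanA ⊔ spanQ : Submodule ℤ E3).toAddSubgroup) := hDS
      exact Metric.finite_isBounded_inter_isClosed DiscreteTopology.isDiscrete
        (ZSpan.fundamentalDomain_isBounded cQb) AddSubgroup.isClosed_of_discrete
    have hmaps : Set.MapsTo f Set.univ (ZSpan.fundamentalDomain cQb ∩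
        (((spanA ⊔ spanQ : Submodule ℤ E3).toAddSubgroup : AddSubgroup E3) : Set E3)) :=
      fun n _ => ⟨hf1 n, hf2 n⟩
    obtain ⟨n₁, -, n₂, -, hne, heq⟩ :=
      Set.infinite_univ.exists_ne_map_eq_of_mapsTo hmaps hfin
    have hdiff : -(n₁ • bA i) + (n₂ • bA i) ∈ spanQ :=
      (le_of_eq hcQspan) ((ZSpan.fract_eq_fract cQb _ _).mp heq)
    have hz : ((n₂ : ℤ) - (n₁ : ℤ)) • bA i ∈ spanQ := by
      have heq2 : ((n₂ : ℤ) - (n₁ : ℤ)) • bA i = -(n₁ • bA i) + (n₂ • bA i) := by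
        rw [sub_smul, natCast_zsmul, natCast_zsmul]
        abel
      rw [heq2]
      exact hdiff
    rcases lt_or_gt_of_ne hne with h | h
    · exact ⟨(n₂ : ℤ) - n₁, by omega, hz⟩
    · refine ⟨(n₁ : ℤ) - n₂, by omega, ?_⟩
      have := neg_mem hz
      rwa [← neg_smul, neg_sub] at this
  -- Λ spans over ℝ
  have hspanTop : Submodule.span ℝ (Λ : Set E3) = ⊤ := by
    have hsub : Set.range bA ⊆ ↑(Submodule.span ℝ (Λ : Set E3)) := by
      rintro _ ⟨i, rfl⟩
      obtain ⟨K, hK, hKQ⟩ := hmult i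
      have hKA : K • bA i ∈ spanA :=
        zsmul_mem (Submodule.subset_span (Set.mem_range_self i)) K
      have hmem : K • bA i ∈ Λ := ⟨hKA, hKQ⟩
      have hmem' : ((K : ℝ)) • bA i ∈ Submodule.span ℝ (Λ : Set E3) := by
        rw [Int.cast_smul_eq_zsmul]
        exact Submodule.subset_span hmem
      have hKne : (K : ℝ) ≠ 0 := by exact_mod_cast hK.ne'
      have := Submodule.smul_mem _ ((K : ℝ)⁻¹) hmem'
      rwa [inv_smul_smul₀ hKne] at this
    set cAb : Module.Basis (Fin 3) ℝ E3 := basisOfLinearIndependentOfCardEqFinrank hbA h3 with hcAb_def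
    have hcAb : ⇑cAb = bA := coe_basisOfLinearIndependentOfCardEqFinrank hbA h3
    have htop : Submodule.span ℝ (Set.range bA) = ⊤ := by
      rw [← hcAb]
      exact cAb.span_eq
    exact top_unique (htop ▸ Submodule.span_le.mpr hsub)
  have hZL : IsZLattice ℝ Λ := ⟨hspanTop⟩
  have hfree : Module.Free ℤ Λ := ZLattice.module_free ℝ Λ
  have hfinite : Module.Finite ℤ Λ := ZLattice.module_finite ℝ Λ
  set B₀ := Module.Free.chooseBasis ℤ Λ with hB₀_def
  have hcard : Fintype.card (Module.Free.ChooseBasisIndex ℤ Λ) = 3 := by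
    have := Module.finrank_eq_card_basis (B₀.ofZLatticeBasis ℝ Λ)
    rw [finrank_euclideanSpace] at this
    simpa using this.symm
  set Bz : Module.Basis (Fin 3) ℤ Λ := B₀.reindex (Fintype.equivFinOfCardEq hcard) with hBz_def
  set BR : Module.Basis (Fin 3) ℝ E3 := Bz.ofZLatticeBasis ℝ Λ with hBR_def
  have hs : Submodule.span ℤ (Set.range ⇑BR) = Λ := Bz.ofZLatticeBasis_span ℝ
  have hAperΛ : ∀ a ∈ A, ∀ v ∈ Λ, a + v ∈ A := fun a ha v hv => hAper a ha v hv.1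
  have hQperΛ : ∀ q ∈ Q, ∀ v ∈ Λ, q + v ∈ Q := fun q hq v hv => hQper q hq v hv.2
  have hcell : cell ⇑BR = ZSpan.fundamentalDomain BR := cell_eq_fd BR
  -- equivariance of γ
  have hequiv : ∀ a ∈ A, ∀ v ∈ Λ, γ (a + v) = γ a + v := by
    intro a ha v hv
    refine (huniq (a + v) (hAperΛ a ha v hv) (γ a + v) (hQperΛ (γ a) (hγ.1 ha) v hv) ?_).symm
    rw [dist_add_right]
    exact hclose a ha
  -- the bijection between motifs
  have hbij : Set.BijOn (fun a => ZSpan.fract BR (γ a)) (A ∩ cell ⇑BR) (Q ∩ cell ⇑BR) := by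
    refine ⟨?_, ?_, ?_⟩
    · rintro a ⟨haA, hac⟩
      constructor
      · have hfl : (ZSpan.floor BR (γ a) : E3) ∈ Λ := by
          rw [← hs]; exact (ZSpan.floor BR (γ a)).2
        have := hQperΛ (γ a) (hγ.1 haA) _ (neg_mem hfl)
        simpa [ZSpan.fract_apply, sub_eq_add_neg] using this
      · rw [hcell]
        exact ZSpan.fract_mem_fundamentalDomain _ _
    · rintro a₁ ⟨h1A, h1c⟩ a₂ ⟨h2A, h2c⟩ heq
      simp only at heq
      have hv : -(γ a₁) + γ a₂ ∈ Submodule.span ℤ (Set.range ⇑BR) :=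
        (ZSpan.fract_eq_fract BR _ _).mp heq
      have hvΛ : -(γ a₁) + γ a₂ ∈ Λ := by rwa [hs] at hv
      have hga2 : γ a₂ = γ (a₁ + (-(γ a₁) + γ a₂)) := by
        rw [hequiv a₁ h1A _ hvΛ]
        abel
      have ha12 : a₂ = a₁ + (-(γ a₁) + γ a₂) :=
        hγ.2.1 h2A (hAperΛ a₁ h1A _ hvΛ) hga2
      have hfr : ZSpan.fract BR a₂ = ZSpan.fract BR a₁ := by
        rw [ha12, ZSpan.fract_add_ZSpan BR _ hv]
      rw [hcell] at h1c h2c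
      rw [ZSpan.fract_eq_self.mpr h2c, ZSpan.fract_eq_self.mpr h1c] at hfr
      exact hfr.symm
    · rintro q ⟨hqQ, hqc⟩
      obtain ⟨a, haA, rfl⟩ := hγ.2.2 hqQ
      have hfl : (ZSpan.floor BR a : E3) ∈ Λ := by
        rw [← hs]; exact (ZSpan.floor BR a).2
      have hflspan : (ZSpan.floor BR a : E3) ∈ Submodule.span ℤ (Set.range ⇑BR) :=
        (le_of_eq hs.symm) hfl
      have hfrA : ZSpan.fract BR a ∈ A := by
        have := hAperΛ a haA _ (neg_mem hfl)
        simpa [ZSpan.fract_apply, sub_eq_add_neg] using this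
      refine ⟨ZSpan.fract BR a, ⟨hfrA, by rw [hcell]; exact ZSpan.fract_mem_fundamentalDomain _ _⟩, ?_⟩
      simp only
      have h1 : ZSpan.fract BR a = a + -(ZSpan.floor BR a : E3) := by
        rw [ZSpan.fract_apply]; abel
      rw [h1, hequiv a haA _ (neg_mem hfl), ZSpan.fract_add_ZSpan BR _ (neg_mem hflspan)]
      rw [hcell] at hqc
      exact ZSpan.fract_eq_self.mpr hqc
  refine ⟨⇑BR, BR.linearIndependent, ?_, ?_, ?_⟩
  · exact decomp A Λ BR hs hAperΛ
  · exact decomp Q Λ BR hs hQperΛ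
  · rw [← Nat.card_coe_set_eq, ← Nat.card_coe_set_eq]
    exact Nat.card_congr (hbij.equiv _)
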